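/- arXiv:2206.02845 — 6 statements merged into one kernel-verified Lean document; each statement's English description precedes it below -/
import Mathlib

section
/- Under the replacement operation, the recall is stochastically monotone: let S ⊆ D, x_i ∈ S, x_j ∈ D\S, with φ(x_i) ≤ φ(x_j), and S' = (S ∪ {x_j}) \ {x_i}. With independent Bernoulli variables B_x with parameters φ(x), N_T = Σ_{x∈T} B_x, and recall M_r(T) = N_T/N_D (defined as 1 when N_D = 0), we have Pr[M_r(S) ≥ γ] ≤ Pr[M_r(S') ≥ γ] for all γ ∈ (0,1). -/
open MeasureTheory ProbabilityTheory Finset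

/-- Monotonicity of recall under replacement: replacing `xᵢ ∈ S` by
`xⱼ ∉ S` with `φ(xᵢ) ≤ φ(xⱼ)` stochastically increases the recall
`M_r(T) = N_T / N_D` (equal to `1` when `N_D = 0`). -/
theorem stmt_6 {Ω ι : Type*} [MeasurableSpace Ω] [DecidableEq ι]
    (P : Measure Ω) [IsProbabilityMeasure P]
    (D S : Finset ι) (hSD : S ⊆ D)
    (xi xj : ι) (hxi : xi ∈ S) (hxj : xj ∈ D \ S)
    (φ : ι → ℝ) (hφ : ∀ x, 0 ≤ φ x ∧ φ x ≤ 1) (hij : φ xi ≤ φ xj)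
    (B : ι → Ω → ℕ)
    (hmeas : ∀ x, Measurable (B x))
    (hBern : ∀ x ω, B x ω = 0 ∨ B x ω = 1)
    (hprob : ∀ x, (P {ω | B x ω = 1}).toReal = φ x)
    (hindep : iIndepFun B P) :
    ∀ γ : ℝ, 0 < γ → γ < 1 →
      P {ω | γ ≤ (if (∑ x ∈ D, B x ω) = 0 then (1 : ℝ)
          else (∑ x ∈ S, B x ω : ℝ) / (∑ x ∈ D, B x ω : ℝ))} ≤
      P {ω | γ ≤ (if (∑ x ∈ D, B x ω) = 0 then (1 : ℝ)
          else (∑ x ∈ insert xj (S.erase xi), B x ω : ℝ) /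
            (∑ x ∈ D, B x ω : ℝ))} := by
  intro γ hγ0 hγ1
  classical
  obtain ⟨hxjD, hxjS⟩ := Finset.mem_sdiff.mp hxj
  have hxiD : xi ∈ D := hSD hxi
  have hne : xi ≠ xj := fun h => hxjS (h ▸ hxi)
  set t : Finset ι := (D.erase xi).erase xj with ht
  have hxjDi : xj ∈ D.erase xi := Finset.mem_erase.mpr ⟨Ne.symm hne, hxjD⟩
  have hSt : S.erase xi ⊆ t := by
    intro x hx
    obtain ⟨hx1, hx2⟩ := Finset.mem_erase.mp hx
    exact Finset.mem_erase.mpr ⟨fun h => hxjS (h ▸ hx2), Finset.mem_erase.mpr ⟨hx1, hSD hx2⟩⟩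
  have hxit : xi ∉ t := fun h => absurd rfl (Finset.mem_erase.mp (Finset.mem_erase.mp h).2).1
  have hxjt : xj ∉ t := fun h => absurd rfl (Finset.mem_erase.mp h).1
  set R : Ω → ℕ := fun ω => ∑ x ∈ t, B x ω with hRdef
  set Tf : Ω → ℕ := fun ω => ∑ x ∈ S.erase xi, B x ω with hTdef
  have hND : ∀ ω, ∑ x ∈ D, B x ω = B xi ω + (B xj ω + R ω) := by
    intro ω
    rw [← Finset.add_sum_erase _ _ hxiD, ← Finset.add_sum_erase _ _ hxjDi]
  have hNS : ∀ ω, ∑ x ∈ S, B x ω = B xi ω + Tf ω := fun ω =>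
    (Finset.add_sum_erase _ _ hxi).symm
  have hxjSe : xj ∉ S.erase xi := fun h => hxjS (Finset.mem_of_mem_erase h)
  have hNS' : ∀ ω, ∑ x ∈ insert xj (S.erase xi), B x ω = B xj ω + Tf ω := fun ω =>
    Finset.sum_insert hxjSe
  have hNDr : ∀ ω, ∑ x ∈ D, (B x ω : ℝ) = (B xi ω : ℝ) + ((B xj ω : ℝ) + (R ω : ℝ)) := by
    intro ω
    rw [← Nat.cast_sum, hND ω]; push_cast; ring
  have hNSr : ∀ ω, ∑ x ∈ S, (B x ω : ℝ) = (B xi ω : ℝ) + (Tf ω : ℝ) := by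
    intro ω
    rw [← Nat.cast_sum, hNS ω]; push_cast; ring
  have hNS'r : ∀ ω, ∑ x ∈ insert xj (S.erase xi), (B x ω : ℝ) = (B xj ω : ℝ) + (Tf ω : ℝ) := by
    intro ω
    rw [← Nat.cast_sum, hNS' ω]; push_cast; ring
  -- abbreviations for the events
  set E1 : Set Ω := {ω | γ ≤ (if (∑ x ∈ D, B x ω) = 0 then (1 : ℝ)
      else (∑ x ∈ S, B x ω : ℝ) / (∑ x ∈ D, B x ω : ℝ))} with hE1def
  set E2 : Set Ω := {ω | γ ≤ (if (∑ x ∈ D, B x ω) = 0 then (1 : ℝ)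
      else (∑ x ∈ insert xj (S.erase xi), B x ω : ℝ) / (∑ x ∈ D, B x ω : ℝ))} with hE2def
  set Aeq : Set Ω := {ω | B xi ω = B xj ω} with hAeqdef
  set C : ℝ → Set Ω := fun c => {ω | γ * (1 + (R ω : ℝ)) ≤ (Tf ω : ℝ) + c} with hCdef
  have hCmem : ∀ (c : ℝ) (ω : Ω), ω ∈ C c ↔ γ * (1 + (R ω : ℝ)) ≤ (Tf ω : ℝ) + c := by
    intro c ω; rw [hCdef]; exact Iff.rfl
  -- pointwise decompositions
  have hdecomp : ∀ ω,
      ((ω ∈ E1 ↔ (ω ∈ E1 ∧ ω ∈ Aeq) ∨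
        ((B xi ω = 0 ∧ B xj ω = 1) ∧ γ * (1 + (R ω : ℝ)) ≤ (Tf ω : ℝ) + 0) ∨
        ((B xi ω = 1 ∧ B xj ω = 0) ∧ γ * (1 + (R ω : ℝ)) ≤ (Tf ω : ℝ) + 1)) ∧
      (ω ∈ E2 ↔ (ω ∈ E2 ∧ ω ∈ Aeq) ∨
        ((B xi ω = 0 ∧ B xj ω = 1) ∧ γ * (1 + (R ω : ℝ)) ≤ (Tf ω : ℝ) + 1) ∨
        ((B xi ω = 1 ∧ B xj ω = 0) ∧ γ * (1 + (R ω : ℝ)) ≤ (Tf ω : ℝ) + 0))) := by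
    intro ω
    simp only [hE1def, hE2def, hAeqdef, Set.mem_setOf_eq, hND ω, hNDr ω, hNSr ω, hNS'r ω]
    rcases hBern xi ω with h1 | h1 <;> rcases hBern xj ω with h2 | h2 <;>
      simp only [h1, h2] <;> norm_num
    all_goals
      have hpos : (0:ℝ) < 1 + (R ω : ℝ) := by positivity
      rw [le_div_iff₀ hpos, le_div_iff₀ hpos]
      constructor <;> constructor <;> intro h <;> linarith
  -- set-level decompositions
  have hE1decomp : E1 = (E1 ∩ Aeq) ∪
      (({ω | B xi ω = 0 ∧ B xj ω = 1} ∩ C 0) ∪ ({ω | B xi ω = 1 ∧ B xj ω = 0} ∩ C 1)) := by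
    ext ω
    simp only [Set.mem_union, Set.mem_inter_iff, Set.mem_setOf_eq, hCmem]
    exact (hdecomp ω).1
  have hE2decomp : E2 = (E2 ∩ Aeq) ∪
      (({ω | B xi ω = 0 ∧ B xj ω = 1} ∩ C 1) ∪ ({ω | B xi ω = 1 ∧ B xj ω = 0} ∩ C 0)) := by
    ext ω
    simp only [Set.mem_union, Set.mem_inter_iff, Set.mem_setOf_eq, hCmem]
    exact (hdecomp ω).2
  have hE12 : E1 ∩ Aeq = E2 ∩ Aeq := by
    ext ω
    simp only [hE1def, hE2def, hAeqdef, Set.mem_inter_iff, Set.mem_setOf_eq]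
    constructor <;> rintro ⟨h, heq⟩ <;> refine ⟨?_, heq⟩ <;>
      [rw [hNS'r ω, ← heq, ← hNSr ω]; rw [hNSr ω, heq, ← hNS'r ω]] <;> exact h
  -- measurability facts
  have hRmeas : Measurable R := Finset.measurable_sum _ (fun i _ => hmeas i)
  have hTmeas : Measurable Tf := Finset.measurable_sum _ (fun i _ => hmeas i)
  have hmC : ∀ c : ℝ, MeasurableSet (C c) := by
    intro c
    rw [hCdef]
    apply measurableSet_le
    · exact measurable_const.mul (measurable_const.add (measurable_from_top.comp hRmeas))
    · exact (measurable_from_top.comp hTmeas).add measurable_const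
  have hmA : ∀ a b : ℕ, MeasurableSet {ω | B xi ω = a ∧ B xj ω = b} := fun a b =>
    (hmeas xi (measurableSet_singleton a)).inter (hmeas xj (measurableSet_singleton b))
  -- disjointness
  have hdisjAB : ∀ (X : Set Ω) (c c' : ℝ), Disjoint (X ∩ Aeq)
      (({ω | B xi ω = 0 ∧ B xj ω = 1} ∩ C c) ∪ ({ω | B xi ω = 1 ∧ B xj ω = 0} ∩ C c')) := by
    intro X c c'
    refine Set.disjoint_left.mpr ?_
    rintro ω ⟨-, heq⟩ (⟨⟨h0, h1⟩, -⟩ | ⟨⟨h0, h1⟩, -⟩) <;>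
      · rw [hAeqdef] at heq; simp only [Set.mem_setOf_eq] at heq; omega
  have hdisjBB : ∀ c c' : ℝ, Disjoint ({ω | B xi ω = 0 ∧ B xj ω = 1} ∩ C c)
      ({ω | B xi ω = 1 ∧ B xj ω = 0} ∩ C c') := by
    intro c c'
    refine Set.disjoint_left.mpr ?_
    rintro ω ⟨⟨h0, h1⟩, -⟩ ⟨⟨h0', h1'⟩, -⟩
    omega
  -- measure decompositions
  have hPE1 : P E1 = P (E1 ∩ Aeq) +
      (P ({ω | B xi ω = 0 ∧ B xj ω = 1} ∩ C 0) + P ({ω | B xi ω = 1 ∧ B xj ω = 0} ∩ C 1)) := by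
    conv_lhs => rw [hE1decomp]
    rw [measure_union (hdisjAB E1 0 1) (((hmA 0 1).inter (hmC 0)).union ((hmA 1 0).inter (hmC 1))),
      measure_union (hdisjBB 0 1) ((hmA 1 0).inter (hmC 1))]
  have hPE2 : P E2 = P (E2 ∩ Aeq) +
      (P ({ω | B xi ω = 0 ∧ B xj ω = 1} ∩ C 1) + P ({ω | B xi ω = 1 ∧ B xj ω = 0} ∩ C 0)) := by
    conv_lhs => rw [hE2decomp]
    rw [measure_union (hdisjAB E2 1 0) (((hmA 0 1).inter (hmC 1)).union ((hmA 1 0).inter (hmC 0))),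
      measure_union (hdisjBB 1 0) ((hmA 1 0).inter (hmC 0))]
  -- independence: factorization
  have hdisjT : Disjoint ({xi, xj} : Finset ι) t := by
    refine Finset.disjoint_left.mpr ?_
    intro a ha hat
    rcases Finset.mem_insert.mp ha with rfl | ha
    · exact hxit hat
    · rw [Finset.mem_singleton] at ha; subst ha; exact hxjt hat
  have hpairIndep : IndepFun (fun ω (i : ({xi, xj} : Finset ι)) => B i ω)
      (fun ω (i : t) => B i ω) P :=
    hindep.indepFun_finset _ _ hdisjT hmeas
  have hxi2 : xi ∈ ({xi, xj} : Finset ι) := by simp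
  have hxj2 : xj ∈ ({xi, xj} : Finset ι) := by simp
  have hkey : ∀ (a b : ℕ) (c : ℝ),
      P ({ω | B xi ω = a ∧ B xj ω = b} ∩ C c)
        = P {ω | B xi ω = a} * P {ω | B xj ω = b} * P (C c) := by
    intro a b c
    have hs : MeasurableSet {g : ({xi, xj} : Finset ι) → ℕ | g ⟨xi, hxi2⟩ = a ∧ g ⟨xj, hxj2⟩ = b} := by
      have : {g : ({xi, xj} : Finset ι) → ℕ | g ⟨xi, hxi2⟩ = a ∧ g ⟨xj, hxj2⟩ = b}
          = (fun g : ({xi, xj} : Finset ι) → ℕ => g ⟨xi, hxi2⟩) ⁻¹' {a} ∩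
            (fun g : ({xi, xj} : Finset ι) → ℕ => g ⟨xj, hxj2⟩) ⁻¹' {b} := rfl
      rw [this]
      exact ((measurable_pi_apply (⟨xi, hxi2⟩ : ({xi, xj} : Finset ι))) (measurableSet_singleton a)).inter
        ((measurable_pi_apply (⟨xj, hxj2⟩ : ({xi, xj} : Finset ι))) (measurableSet_singleton b))
    have hu : MeasurableSet {g : ↥t → ℕ |
        γ * (1 + ((∑ i : ↥t, g i : ℕ) : ℝ)) ≤ ((∑ i : ↥t, if (i : ι) ∈ S.erase xi then g i else 0 : ℕ) : ℝ) + c} := by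
      refine measurableSet_le
        (measurable_const.mul (measurable_const.add (measurable_from_top.comp
          (Finset.measurable_sum _ (fun i _ => measurable_pi_apply i)))))
        ((measurable_from_top.comp (Finset.measurable_sum _ (fun i _ => ?_))).add measurable_const)
      by_cases h : (i : ι) ∈ S.erase xi <;> simp only [h, if_true, if_false]
      · exact measurable_pi_apply i
      · exact measurable_const
    have h1 : (fun ω (i : ({xi, xj} : Finset ι)) => B i ω) ⁻¹'
        {g | g ⟨xi, hxi2⟩ = a ∧ g ⟨xj, hxj2⟩ = b} = {ω | B xi ω = a ∧ B xj ω = b} := rfl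
    have h2 : (fun ω (i : t) => B i ω) ⁻¹' {g : ↥t → ℕ |
        γ * (1 + ((∑ i : ↥t, g i : ℕ) : ℝ)) ≤ ((∑ i : ↥t, if (i : ι) ∈ S.erase xi then g i else 0 : ℕ) : ℝ) + c}
        = C c := by
      ext ω
      simp only [Set.mem_preimage, Set.mem_setOf_eq, hCmem]
      have hRe : (∑ i : t, B (i : ι) ω) = R ω := Finset.sum_coe_sort t (fun x => B x ω)
      have hTe : (∑ i : t, if (i : ι) ∈ S.erase xi then B (i : ι) ω else 0) = Tf ω := by
        rw [Finset.sum_coe_sort t (fun x => if x ∈ S.erase xi then B x ω else 0),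
          ← Finset.sum_filter, Finset.filter_mem_eq_inter, Finset.inter_eq_right.mpr hSt]
      rw [hRe, hTe]
    have hfact := hpairIndep.measure_inter_preimage_eq_mul _ _ hs hu
    rw [h1, h2] at hfact
    rw [hfact]
    have hpair := (hindep.indepFun hne).measure_inter_preimage_eq_mul {a} {b}
      (measurableSet_singleton a) (measurableSet_singleton b)
    have h3 : B xi ⁻¹' {a} ∩ B xj ⁻¹' {b} = {ω | B xi ω = a ∧ B xj ω = b} := rfl
    have h4 : B xi ⁻¹' {a} = {ω | B xi ω = a} := rfl
    have h5 : B xj ⁻¹' {b} = {ω | B xj ω = b} := rfl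
    rw [h3, h4, h5] at hpair
    rw [hpair]
  -- probabilities of the Bernoulli events
  have hcompl : ∀ x, ({ω | B x ω = 0} : Set Ω) = {ω | B x ω = 1}ᶜ := by
    intro x
    ext ω
    simp only [Set.mem_setOf_eq, Set.mem_compl_iff]
    have := hBern x ω
    omega
  have hP1 : ∀ x, (P {ω | B x ω = 1}).toReal = φ x := hprob
  have hP0 : ∀ x, (P {ω | B x ω = 0}).toReal = 1 - φ x := by
    intro x
    have hms : MeasurableSet {ω | B x ω = 1} := hmeas x (measurableSet_singleton 1)
    rw [hcompl x, prob_compl_eq_one_sub hms,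
      ENNReal.toReal_sub_of_le prob_le_one ENNReal.one_ne_top, ENNReal.toReal_one, hprob x]
  -- compare the two extra pieces
  have hC01 : C 0 ⊆ C 1 := by
    intro ω h
    rw [hCmem] at h ⊢
    linarith
  have hfin : ∀ s : Set Ω, P s ≠ ⊤ := fun s => measure_ne_top P s
  have hprod_fin : ∀ u v w : Set Ω, P u * P v * P w ≠ ⊤ := fun u v w =>
    ENNReal.mul_ne_top (ENNReal.mul_ne_top (hfin u) (hfin v)) (hfin w)
  have hmain : P ({ω | B xi ω = 0 ∧ B xj ω = 1} ∩ C 0) + P ({ω | B xi ω = 1 ∧ B xj ω = 0} ∩ C 1)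
      ≤ P ({ω | B xi ω = 0 ∧ B xj ω = 1} ∩ C 1) + P ({ω | B xi ω = 1 ∧ B xj ω = 0} ∩ C 0) := by
    rw [hkey 0 1 0, hkey 1 0 1, hkey 0 1 1, hkey 1 0 0]
    rw [← ENNReal.toReal_le_toReal
      (ENNReal.add_ne_top.mpr ⟨hprod_fin _ _ _, hprod_fin _ _ _⟩)
      (ENNReal.add_ne_top.mpr ⟨hprod_fin _ _ _, hprod_fin _ _ _⟩)]
    rw [ENNReal.toReal_add (hprod_fin _ _ _) (hprod_fin _ _ _),
      ENNReal.toReal_add (hprod_fin _ _ _) (hprod_fin _ _ _)]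
    simp only [ENNReal.toReal_mul, hP0, hP1]
    have hd01 : (P (C 0)).toReal ≤ (P (C 1)).toReal :=
      ENNReal.toReal_mono (hfin _) (measure_mono hC01)
    have hd0 : 0 ≤ (P (C 0)).toReal := ENNReal.toReal_nonneg
    have h1 := (hφ xi).1
    have h2 := (hφ xi).2
    have h3 := (hφ xj).1
    have h4 := (hφ xj).2
    nlinarith [mul_nonneg (sub_nonneg.mpr hij) (sub_nonneg.mpr hd01)]
  calc P E1 = P (E1 ∩ Aeq) +
      (P ({ω | B xi ω = 0 ∧ B xj ω = 1} ∩ C 0) + P ({ω | B xi ω = 1 ∧ B xj ω = 0} ∩ C 1)) := hPE1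
    _ ≤ P (E2 ∩ Aeq) +
      (P ({ω | B xi ω = 0 ∧ B xj ω = 1} ∩ C 1) + P ({ω | B xi ω = 1 ∧ B xj ω = 0} ∩ C 0)) := by
        rw [hE12]; exact add_le_add_right hmain _
    _ = P E2 := hPE2.symm
end

section
/- Among all subsets of size k, the proxy top-k subset is optimal: if D_k denotes a k-element subset of D consisting of elements with the k largest values of φ, then for any S ⊆ D with |S| = k and any γ ∈ (0,1), Pr[M(D_k) ≥ γ] ≥ Pr[M(S) ≥ γ] and E[M̄(D_k)] ≥ E[M̄(S)], where M is precision or recall (and M̄ the other). -/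
open MeasureTheory ProbabilityTheory Finset

set_option linter.unusedSectionVars false
set_option linter.unusedVariables false
set_option maxHeartbeats 1000000

set_option maxHeartbeats 1000000

section
variable {ι : Type*} [DecidableEq ι]

noncomputable def cfgW (D : Finset ι) (φ : ι → ℝ) (T : Finset ι) : ℝ :=
  ∏ a ∈ D, (if a ∈ T then φ a else 1 - φ a)

lemma quad (px py a b c : ℝ) (hpx1 : px ≤ 1) (hpy0 : 0 ≤ py)
    (hyx : py ≤ px) (hc : 0 ≤ c) (hab : a ≤ b) :
    c * ((1-px) * (py * b)) + c * (px * ((1-py) * a)) ≤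
    c * ((1-px) * (py * a)) + c * (px * ((1-py) * b)) := by
  nlinarith [mul_nonneg (mul_nonneg (sub_nonneg.2 hyx) hc) (sub_nonneg.2 hab)]

lemma swap_core (D : Finset ι) (φ : ι → ℝ) (hφ : ∀ x, 0 ≤ φ x ∧ φ x ≤ 1)
    (G : ℕ → ℕ → ℝ) (hG : ∀ m n, G m n ≤ G (m+1) n)
    {S : Finset ι} (hSD : S ⊆ D) {x y : ι} (hxD : x ∈ D) (hxS : x ∉ S) (hyS : y ∈ S)
    (hxy : φ y ≤ φ x) :
    ∑ T ∈ D.powerset, cfgW D φ T * G ((S ∩ T).card) T.card ≤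
    ∑ T ∈ D.powerset, cfgW D φ T * G ((insert x (S.erase y) ∩ T).card) T.card := by
  classical
  have hyD : y ∈ D := hSD hyS
  have hne : x ≠ y := fun h => hxS (h ▸ hyS)
  set D₀ : Finset ι := (D.erase x).erase y with hD₀def
  have hxD₀ : x ∉ D₀ := by simp [hD₀def, hne]
  have hyD₀ : y ∉ D₀ := by simp [hD₀def]
  have hx1 : x ∉ insert y D₀ := by simp [hne, hxD₀]
  have hD : D = insert x (insert y D₀) := by
    ext a
    simp only [hD₀def, mem_insert, mem_erase]
    constructor
    · intro ha
      by_cases h1 : a = x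
      · exact Or.inl h1
      · by_cases h2 : a = y
        · exact Or.inr (Or.inl h2)
        · exact Or.inr (Or.inr ⟨h2, h1, ha⟩)
    · rintro (rfl | rfl | ⟨-, -, h⟩) <;> [exact hxD; exact hyD; exact h]
  rw [hD, sum_powerset_insert hx1, sum_powerset_insert hx1,
    sum_powerset_insert hyD₀, sum_powerset_insert hyD₀, sum_powerset_insert hyD₀,
    sum_powerset_insert hyD₀]
  rw [← sum_add_distrib, ← sum_add_distrib, ← sum_add_distrib, ← sum_add_distrib,
    ← sum_add_distrib, ← sum_add_distrib]
  refine sum_le_sum fun T₀ hT₀mem => ?_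
  have hT₀ : T₀ ⊆ D₀ := mem_powerset.mp hT₀mem
  have hxT : x ∉ T₀ := fun h => hxD₀ (hT₀ h)
  have hyT : y ∉ T₀ := fun h => hyD₀ (hT₀ h)
  have hxyT : x ∉ insert y T₀ := by simp [hne, hxT]
  -- set computations
  have tac : True := trivial
  have hS'T : insert x (S.erase y) ∩ T₀ = S ∩ T₀ := by
    ext a; by_cases hax : a = x <;> by_cases hay : a = y <;> subst_vars <;>
      simp only [mem_inter, mem_insert, mem_erase] <;> tauto
  have hSy : S ∩ insert y T₀ = insert y (S ∩ T₀) := by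
    ext a; by_cases hax : a = x <;> by_cases hay : a = y <;> subst_vars <;>
      simp only [mem_inter, mem_insert, mem_erase] <;> tauto
  have hS'y : insert x (S.erase y) ∩ insert y T₀ = S ∩ T₀ := by
    ext a; by_cases hax : a = x <;> by_cases hay : a = y <;> subst_vars <;>
      simp only [mem_inter, mem_insert, mem_erase] <;> tauto
  have hSx : S ∩ insert x T₀ = S ∩ T₀ := by
    ext a; by_cases hax : a = x <;> by_cases hay : a = y <;> subst_vars <;>
      simp only [mem_inter, mem_insert, mem_erase] <;> tauto
  have hS'x : insert x (S.erase y) ∩ insert x T₀ = insert x (S ∩ T₀) := by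
    ext a; by_cases hax : a = x <;> by_cases hay : a = y <;> subst_vars <;>
      simp only [mem_inter, mem_insert, mem_erase] <;> tauto
  have hSxy : S ∩ insert x (insert y T₀) = insert y (S ∩ T₀) := by
    ext a; by_cases hax : a = x <;> by_cases hay : a = y <;> subst_vars <;>
      simp only [mem_inter, mem_insert, mem_erase] <;> tauto
  have hS'xy : insert x (S.erase y) ∩ insert x (insert y T₀) = insert x (S ∩ T₀) := by
    ext a; by_cases hax : a = x <;> by_cases hay : a = y <;> subst_vars <;>
      simp only [mem_inter, mem_insert, mem_erase] <;> tauto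
  set c : ℝ := ∏ a ∈ D₀, (if a ∈ T₀ then φ a else 1 - φ a) with hc
  have hc0 : 0 ≤ c := by
    refine Finset.prod_nonneg fun a _ => ?_
    by_cases h : a ∈ T₀ <;> simp [h, (hφ a).1, sub_nonneg.2 (hφ a).2]
  have hw : ∀ T : Finset ι, cfgW (insert x (insert y D₀)) φ T =
      (if x ∈ T then φ x else 1 - φ x) *
      ((if y ∈ T then φ y else 1 - φ y) * ∏ a ∈ D₀, (if a ∈ T then φ a else 1 - φ a)) := by
    intro T
    rw [cfgW, prod_insert hx1, prod_insert hyD₀]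
  have hinner : ∀ T : Finset ι, (∀ a ∈ D₀, (a ∈ T ↔ a ∈ T₀)) →
      (∏ a ∈ D₀, (if a ∈ T then φ a else 1 - φ a)) = c := by
    intro T hT
    exact Finset.prod_congr rfl fun a ha => by rw [if_congr (hT a ha) rfl rfl]
  have hmemy : ∀ a ∈ D₀, (a ∈ insert y T₀ ↔ a ∈ T₀) := by
    intro a ha
    simp only [mem_insert]
    exact ⟨fun h => h.elim (fun h' => absurd (h' ▸ ha) hyD₀) id, Or.inr⟩
  have hmemx : ∀ a ∈ D₀, (a ∈ insert x T₀ ↔ a ∈ T₀) := by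
    intro a ha
    simp only [mem_insert]
    exact ⟨fun h => h.elim (fun h' => absurd (h' ▸ ha) hxD₀) id, Or.inr⟩
  have hmemxy : ∀ a ∈ D₀, (a ∈ insert x (insert y T₀) ↔ a ∈ T₀) := by
    intro a ha
    simp only [mem_insert]
    constructor
    · rintro (h' | h' | h')
      · exact absurd (h' ▸ ha) hxD₀
      · exact absurd (h' ▸ ha) hyD₀
      · exact h'
    · exact fun h => Or.inr (Or.inr h)
  have e1 : cfgW (insert x (insert y D₀)) φ T₀ = (1 - φ x) * ((1 - φ y) * c) := by
    rw [hw, if_neg hxT, if_neg hyT, hinner T₀ (fun a _ => Iff.rfl)]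
  have e2 : cfgW (insert x (insert y D₀)) φ (insert y T₀) = (1 - φ x) * (φ y * c) := by
    rw [hw, if_neg hxyT, if_pos (mem_insert_self y T₀), hinner _ hmemy]
  have e3 : cfgW (insert x (insert y D₀)) φ (insert x T₀) = φ x * ((1 - φ y) * c) := by
    rw [hw, if_pos (mem_insert_self x T₀), if_neg (by simp [Ne.symm hne, hyT]), hinner _ hmemx]
  have e4 : cfgW (insert x (insert y D₀)) φ (insert x (insert y T₀)) = φ x * (φ y * c) := by
    rw [hw, if_pos (mem_insert_self x _), if_pos (by simp),
      hinner _ hmemxy]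
  -- cardinalities
  have hyST : y ∉ S ∩ T₀ := fun h => hyT (mem_inter.mp h).2
  have hxST : x ∉ S ∩ T₀ := fun h => hxT (mem_inter.mp h).2
  have cy : (insert y (S ∩ T₀)).card = (S ∩ T₀).card + 1 := card_insert_of_notMem hyST
  have cx : (insert x (S ∩ T₀)).card = (S ∩ T₀).card + 1 := card_insert_of_notMem hxST
  have cty : (insert y T₀).card = T₀.card + 1 := card_insert_of_notMem hyT
  have ctx : (insert x T₀).card = T₀.card + 1 := card_insert_of_notMem hxT
  have ctxy : (insert x (insert y T₀)).card = T₀.card + 1 + 1 := by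
    rw [card_insert_of_notMem hxyT, cty]
  rw [hS'T, hSy, hS'y, hSx, hS'x, hSxy, hS'xy, e1, e2, e3, e4, cy, cx, cty, ctx, ctxy]
  have key := quad (φ x) (φ y) (G (S ∩ T₀).card (T₀.card + 1))
    (G ((S ∩ T₀).card + 1) (T₀.card + 1)) c (hφ x).2 (hφ y).1 hxy hc0
    (hG (S ∩ T₀).card (T₀.card + 1))
  linarith [key]
lemma chain_core (D : Finset ι) (φ : ι → ℝ) (hφ : ∀ x, 0 ≤ φ x ∧ φ x ≤ 1)
    (k : ℕ) (Dk : Finset ι) (hDkD : Dk ⊆ D) (hDkcard : Dk.card = k)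
    (htop : ∀ x ∈ Dk, ∀ y ∈ D \ Dk, φ y ≤ φ x)
    (G : ℕ → ℕ → ℝ) (hG : ∀ m n, G m n ≤ G (m+1) n) :
    ∀ (n : ℕ) (S : Finset ι), S ⊆ D → S.card = k → (S \ Dk).card = n →
      ∑ T ∈ D.powerset, cfgW D φ T * G ((S ∩ T).card) T.card ≤
      ∑ T ∈ D.powerset, cfgW D φ T * G ((Dk ∩ T).card) T.card := by
  intro n
  induction n using Nat.strong_induction_on with
  | _ n ih =>
    intro S hSD hScard hsd
    by_cases hEq : S = Dk
    · subst hEq; exact le_refl _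
    · have hSdk : (S \ Dk).Nonempty := by
        rw [Finset.sdiff_nonempty]
        intro hsub
        exact hEq (Finset.eq_of_subset_of_card_le hsub (by rw [hDkcard, hScard]))
      have hDkS : (Dk \ S).Nonempty := by
        rw [Finset.sdiff_nonempty]
        intro hsub
        exact hEq (Finset.eq_of_subset_of_card_le hsub (by rw [hDkcard, hScard])).symm
      obtain ⟨y, hy⟩ := hSdk
      obtain ⟨x, hx⟩ := hDkS
      rw [mem_sdiff] at hy hx
      obtain ⟨hyS, hyDk⟩ := hy
      obtain ⟨hxDk, hxS⟩ := hx
      have hφxy : φ y ≤ φ x := htop x hxDk y (mem_sdiff.mpr ⟨hSD hyS, hyDk⟩)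
      have step := swap_core D φ hφ G hG hSD (hDkD hxDk) hxS hyS hφxy
      set S' : Finset ι := insert x (S.erase y) with hS'
      have hxe : x ∉ S.erase y := fun h => hxS (mem_of_mem_erase h)
      have hS'D : S' ⊆ D := insert_subset (hDkD hxDk) ((erase_subset _ _).trans hSD)
      have hk1 : 1 ≤ k := hScard ▸ card_pos.mpr ⟨y, hyS⟩
      have hS'card : S'.card = k := by
        rw [hS', card_insert_of_notMem hxe, card_erase_of_mem hyS, hScard]
        omega
      have hS'sd : S' \ Dk = (S \ Dk).erase y := by
        ext a
        simp only [hS', mem_sdiff, mem_erase, mem_insert]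
        constructor
        · rintro ⟨(rfl | ⟨hay, haS⟩), haDk⟩
          · exact absurd hxDk haDk
          · exact ⟨hay, haS, haDk⟩
        · rintro ⟨hay, haS, haDk⟩
          exact ⟨Or.inr ⟨hay, haS⟩, haDk⟩
      have hn1 : 1 ≤ n := hsd ▸ card_pos.mpr ⟨y, mem_sdiff.mpr ⟨hyS, hyDk⟩⟩
      have hcard' : (S' \ Dk).card = n - 1 := by
        rw [hS'sd, card_erase_of_mem (mem_sdiff.mpr ⟨hyS, hyDk⟩), hsd]
      exact le_trans step (ih (n-1) (by omega) S' hS'D hS'card hcard')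
end

section
variable {Ω ι : Type*} [MeasurableSpace Ω] [DecidableEq ι]
  (P : Measure Ω) [IsProbabilityMeasure P]
  (D : Finset ι) (φ : ι → ℝ) (B : ι → Ω → ℕ)

lemma atom_eq (hBern : ∀ x ω, B x ω = 0 ∨ B x ω = 1) {T : Finset ι} (hT : T ⊆ D) :
    {ω | D.filter (fun a => B a ω = 1) = T} =
      ⋂ a ∈ D, B a ⁻¹' {if a ∈ T then 1 else 0} := by
  ext ω
  simp only [Set.mem_setOf_eq, Set.mem_iInter, Set.mem_preimage, Set.mem_singleton_iff]
  constructor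
  · intro h a ha
    by_cases haT : a ∈ T
    · rw [if_pos haT]
      have : a ∈ D.filter (fun a => B a ω = 1) := h ▸ haT
      exact (mem_filter.mp this).2
    · rw [if_neg haT]
      have : a ∉ D.filter (fun a => B a ω = 1) := h ▸ haT
      rcases hBern a ω with h0 | h1
      · exact h0
      · exact absurd (mem_filter.mpr ⟨ha, h1⟩) this
  · intro h
    ext b
    simp only [mem_filter]
    constructor
    · rintro ⟨hbD, hb1⟩
      have := h b hbD
      by_cases hbT : b ∈ T
      · exact hbT
      · rw [if_neg hbT] at this; omega
    · intro hbT
      refine ⟨hT hbT, ?_⟩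
      have := h b (hT hbT)
      rwa [if_pos hbT] at this

lemma atom_meas (hmeas : ∀ x, Measurable (B x))
    (hBern : ∀ x ω, B x ω = 0 ∨ B x ω = 1) {T : Finset ι} (hT : T ⊆ D) :
    MeasurableSet {ω | D.filter (fun a => B a ω = 1) = T} := by
  rw [atom_eq D B hBern hT]
  exact Finset.measurableSet_biInter D fun a _ => hmeas a (measurableSet_singleton _)

lemma atom_prob (hmeas : ∀ x, Measurable (B x))
    (hBern : ∀ x ω, B x ω = 0 ∨ B x ω = 1)
    (hprob : ∀ x, (P {ω | B x ω = 1}).toReal = φ x)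
    (hφ : ∀ x, 0 ≤ φ x ∧ φ x ≤ 1)
    (hindep : iIndepFun B P)
    {T : Finset ι} (hT : T ⊆ D) :
    (P {ω | D.filter (fun a => B a ω = 1) = T}).toReal = cfgW D φ T := by
  rw [atom_eq D B hBern hT]
  rw [hindep.meas_biInter (fun a _ => ⟨{if a ∈ T then 1 else 0}, measurableSet_singleton _, rfl⟩)]
  rw [ENNReal.toReal_prod, cfgW]
  refine Finset.prod_congr rfl fun a _ => ?_
  have h1 : B a ⁻¹' {1} = {ω | B a ω = 1} := by ext ω; simp
  by_cases haT : a ∈ T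
  · rw [if_pos haT, if_pos haT, h1, hprob a]
  · rw [if_neg haT, if_neg haT]
    have h0 : B a ⁻¹' {0} = {ω | B a ω = 1}ᶜ := by
      ext ω
      simp only [Set.mem_preimage, Set.mem_singleton_iff, Set.mem_compl_iff, Set.mem_setOf_eq]
      rcases hBern a ω with h | h <;> omega
    rw [h0, prob_compl_eq_one_sub (h1 ▸ hmeas a (measurableSet_singleton 1) : MeasurableSet {ω | B a ω = 1}),
      ENNReal.toReal_sub_of_le prob_le_one ENNReal.one_ne_top, ENNReal.toReal_one, hprob a]

lemma key_int (hmeas : ∀ x, Measurable (B x))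
    (hBern : ∀ x ω, B x ω = 0 ∨ B x ω = 1)
    (hprob : ∀ x, (P {ω | B x ω = 1}).toReal = φ x)
    (hφ : ∀ x, 0 ≤ φ x ∧ φ x ≤ 1)
    (hindep : iIndepFun B P)
    (F : Finset ι → ℝ) :
    ∫ ω, F (D.filter (fun a => B a ω = 1)) ∂P =
      ∑ T ∈ D.powerset, cfgW D φ T * F T := by
  have hpt : ∀ ω, F (D.filter (fun a => B a ω = 1)) =
      ∑ T ∈ D.powerset, Set.indicator {ω' | D.filter (fun a => B a ω' = 1) = T}
        (fun _ => F T) ω := by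
    intro ω
    rw [Finset.sum_eq_single (D.filter (fun a => B a ω = 1))]
    · rw [Set.indicator_of_mem (by exact rfl)]
    · intro T _ hne
      exact Set.indicator_of_notMem (fun h => hne (Eq.symm h)) _
    · intro h
      exact absurd (mem_powerset.mpr (filter_subset _ _)) h
  calc ∫ ω, F (D.filter (fun a => B a ω = 1)) ∂P
      = ∫ ω, ∑ T ∈ D.powerset, Set.indicator {ω' | D.filter (fun a => B a ω' = 1) = T}
          (fun _ => F T) ω ∂P := by
        exact integral_congr_ae (Filter.Eventually.of_forall hpt)
    _ = ∑ T ∈ D.powerset, ∫ ω, Set.indicator {ω' | D.filter (fun a => B a ω' = 1) = T}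
          (fun _ => F T) ω ∂P := by
        exact integral_finset_sum _ fun T hT =>
          (integrable_const (F T)).indicator (atom_meas D B hmeas hBern (mem_powerset.mp hT))
    _ = ∑ T ∈ D.powerset, cfgW D φ T * F T := by
        refine Finset.sum_congr rfl fun T hT => ?_
        rw [integral_indicator_const (F T) (atom_meas D B hmeas hBern (mem_powerset.mp hT)),
          measureReal_def, atom_prob P D φ B hmeas hBern hprob hφ hindep (mem_powerset.mp hT), smul_eq_mul]

lemma event_meas (hmeas : ∀ x, Measurable (B x))
    (hBern : ∀ x ω, B x ω = 0 ∨ B x ω = 1) (v : Finset ι → ℝ) (γ : ℝ) :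
    MeasurableSet {ω | γ ≤ v (D.filter (fun a => B a ω = 1))} := by
  have : {ω | γ ≤ v (D.filter (fun a => B a ω = 1))} =
      ⋃ T ∈ D.powerset.filter (fun T => γ ≤ v T),
        {ω | D.filter (fun a => B a ω = 1) = T} := by
    ext ω
    simp only [Set.mem_setOf_eq, Set.mem_iUnion, mem_filter, mem_powerset, exists_prop]
    constructor
    · intro h
      exact ⟨D.filter (fun a => B a ω = 1), ⟨filter_subset _ _, h⟩, rfl⟩
    · rintro ⟨T, ⟨-, hγ⟩, h⟩
      rw [h]; exact hγ
  rw [this]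
  exact (D.powerset.filter _).measurableSet_biUnion fun T hT =>
    atom_meas D B hmeas hBern (mem_powerset.mp (mem_filter.mp hT).1)

lemma key_prob (hmeas : ∀ x, Measurable (B x))
    (hBern : ∀ x ω, B x ω = 0 ∨ B x ω = 1)
    (hprob : ∀ x, (P {ω | B x ω = 1}).toReal = φ x)
    (hφ : ∀ x, 0 ≤ φ x ∧ φ x ≤ 1)
    (hindep : iIndepFun B P)
    (v : Finset ι → ℝ) (γ : ℝ) :
    (P {ω | γ ≤ v (D.filter (fun a => B a ω = 1))}).toReal =
      ∑ T ∈ D.powerset, cfgW D φ T * (if γ ≤ v T then 1 else 0) := by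
  have h1 : (P {ω | γ ≤ v (D.filter (fun a => B a ω = 1))}).toReal =
      ∫ ω, Set.indicator {ω' | γ ≤ v (D.filter (fun a => B a ω' = 1))} (fun _ => (1:ℝ)) ω ∂P := by
    rw [integral_indicator_const (1:ℝ) (event_meas D B hmeas hBern v γ), smul_eq_mul, mul_one, measureReal_def]
  rw [h1]
  rw [← key_int P D φ B hmeas hBern hprob hφ hindep (fun T => if γ ≤ v T then 1 else 0)]
  refine integral_congr_ae (Filter.Eventually.of_forall fun ω => ?_)
  simp [Set.indicator_apply]
end


/-- Among all subsets of size `k`, the proxy top-`k` subset `Dk` (the `k`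
elements of largest `φ`-values) maximizes both the success probability
`Pr[M ≥ γ]` (for `M` precision or recall) and the expected complementary
rate (expected recall and expected precision). -/
theorem stmt_7 {Ω ι : Type*} [MeasurableSpace Ω] [DecidableEq ι]
    (P : Measure Ω) [IsProbabilityMeasure P]
    (D : Finset ι) (k : ℕ)
    (φ : ι → ℝ) (Dk : Finset ι) (hDkD : Dk ⊆ D) (hDkcard : Dk.card = k)
    (htop : ∀ x ∈ Dk, ∀ y ∈ D \ Dk, φ y ≤ φ x)
    (S : Finset ι) (hSD : S ⊆ D) (hScard : S.card = k)
    (hφ : ∀ x, 0 ≤ φ x ∧ φ x ≤ 1)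
    (B : ι → Ω → ℕ)
    (hmeas : ∀ x, Measurable (B x))
    (hBern : ∀ x ω, B x ω = 0 ∨ B x ω = 1)
    (hprob : ∀ x, (P {ω | B x ω = 1}).toReal = φ x)
    (hindep : iIndepFun B P)
    (γ : ℝ) (hγ0 : 0 < γ) (hγ1 : γ < 1) :
    (P {ω | γ ≤ (∑ x ∈ S, B x ω : ℝ) / S.card} ≤
       P {ω | γ ≤ (∑ x ∈ Dk, B x ω : ℝ) / Dk.card}) ∧
    (P {ω | γ ≤ (if (∑ x ∈ D, B x ω) = 0 then (1 : ℝ)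
          else (∑ x ∈ S, B x ω : ℝ) / (∑ x ∈ D, B x ω : ℝ))} ≤
       P {ω | γ ≤ (if (∑ x ∈ D, B x ω) = 0 then (1 : ℝ)
          else (∑ x ∈ Dk, B x ω : ℝ) / (∑ x ∈ D, B x ω : ℝ))}) ∧
    (∫ ω, (∑ x ∈ S, B x ω : ℝ) / S.card ∂P ≤
       ∫ ω, (∑ x ∈ Dk, B x ω : ℝ) / Dk.card ∂P) ∧
    (∫ ω, (if (∑ x ∈ D, B x ω) = 0 then (1 : ℝ)
          else (∑ x ∈ S, B x ω : ℝ) / (∑ x ∈ D, B x ω : ℝ)) ∂P ≤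
       ∫ ω, (if (∑ x ∈ D, B x ω) = 0 then (1 : ℝ)
          else (∑ x ∈ Dk, B x ω : ℝ) / (∑ x ∈ D, B x ω : ℝ)) ∂P) := by
  classical
  by_cases hSDk : S = Dk
  · subst hSDk
    exact ⟨le_rfl, le_rfl, le_rfl, le_rfl⟩
  have hk : 0 < k := by
    rcases Nat.eq_zero_or_pos k with hk0 | hk
    · exact absurd (by rw [card_eq_zero.mp (hScard.trans hk0),
        card_eq_zero.mp (hDkcard.trans hk0)]) hSDk
    · exact hk
  have hkR : (0:ℝ) < (k:ℝ) := Nat.cast_pos.mpr hk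
  -- the value functions
  have hG3 : ∀ m n : ℕ, ((m:ℝ)/(k:ℝ)) ≤ (((m+1:ℕ):ℝ)/(k:ℝ)) := by
    intro m n
    refine (div_le_div_iff_of_pos_right hkR).mpr ?_
    push_cast; linarith
  have hG4 : ∀ m n : ℕ, (if n = 0 then (1:ℝ) else (m:ℝ)/(n:ℝ)) ≤
      (if n = 0 then (1:ℝ) else (((m+1:ℕ)):ℝ)/(n:ℝ)) := by
    intro m n
    by_cases hn : n = 0
    · simp [hn]
    · rw [if_neg hn, if_neg hn]
      refine (div_le_div_iff_of_pos_right (Nat.cast_pos.mpr (Nat.pos_of_ne_zero hn))).mpr ?_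
      push_cast; linarith
  have hite : ∀ a b : ℝ, a ≤ b →
      (if γ ≤ a then (1:ℝ) else 0) ≤ (if γ ≤ b then (1:ℝ) else 0) := by
    intro a b h
    by_cases h1 : γ ≤ a
    · rw [if_pos h1, if_pos (h1.trans h)]
    · by_cases h2 : γ ≤ b <;> simp [h1, h2]
  -- chain instances
  have chainG : ∀ G : ℕ → ℕ → ℝ, (∀ m n, G m n ≤ G (m+1) n) →
      ∑ T ∈ D.powerset, cfgW D φ T * G ((S ∩ T).card) T.card ≤
      ∑ T ∈ D.powerset, cfgW D φ T * G ((Dk ∩ T).card) T.card := fun G hG =>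
    chain_core D φ hφ k Dk hDkD hDkcard htop G hG _ S hSD hScard rfl
  -- pointwise sum identities
  have hsum : ∀ (U : Finset ι), U ⊆ D → ∀ ω,
      (∑ x ∈ U, B x ω) = (U ∩ D.filter (fun a => B a ω = 1)).card := by
    intro U hU ω
    have h1 : U ∩ D.filter (fun a => B a ω = 1) = U.filter (fun a => B a ω = 1) := by
      ext a
      simp only [mem_inter, mem_filter]
      exact ⟨fun ⟨h, _, hb⟩ => ⟨h, hb⟩, fun ⟨h, hb⟩ => ⟨h, hU h, hb⟩⟩
    rw [h1, Finset.card_filter]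
    refine Finset.sum_congr rfl fun a _ => ?_
    rcases hBern a ω with h | h <;> simp [h]
  have hDf : ∀ ω, (∑ x ∈ D, B x ω) = (D.filter (fun a => B a ω = 1)).card := by
    intro ω
    rw [hsum D Subset.rfl ω, inter_eq_right.mpr (filter_subset _ _)]
  have ecast : ∀ (U : Finset ι), U ⊆ D → ∀ ω,
      (∑ x ∈ U, (B x ω : ℝ)) = (((U ∩ D.filter (fun a => B a ω = 1)).card : ℕ) : ℝ) := by
    intro U hU ω
    rw [← Nat.cast_sum, hsum U hU ω]
  have ecastD : ∀ ω, (∑ x ∈ D, (B x ω : ℝ)) =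
      (((D.filter (fun a => B a ω = 1)).card : ℕ) : ℝ) := by
    intro ω
    rw [← Nat.cast_sum, hDf ω]
  -- pointwise value identities
  have hprec : ∀ (U : Finset ι), U ⊆ D → U.card = k → ∀ ω,
      (∑ x ∈ U, (B x ω : ℝ)) / (U.card : ℝ) =
      (fun T : Finset ι => ((U ∩ T).card : ℝ) / (k : ℝ)) (D.filter (fun a => B a ω = 1)) := by
    intro U hU hUcard ω
    rw [ecast U hU ω, hUcard]
  have hrec : ∀ (U : Finset ι), U ⊆ D → ∀ ω,
      (if (∑ x ∈ D, B x ω) = 0 then (1:ℝ)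
        else (∑ x ∈ U, (B x ω : ℝ)) / (∑ x ∈ D, (B x ω : ℝ))) =
      (fun T : Finset ι => if T.card = 0 then (1:ℝ) else ((U ∩ T).card : ℝ) / (T.card : ℝ))
        (D.filter (fun a => B a ω = 1)) := by
    intro U hU ω
    rw [ecast U hU ω, ecastD ω, hDf ω]
  refine ⟨?_, ?_, ?_, ?_⟩
  · -- probability, precision
    refine (ENNReal.toReal_le_toReal (measure_ne_top _ _) (measure_ne_top _ _)).mp ?_
    have hs1 : {ω | γ ≤ (∑ x ∈ S, (B x ω : ℝ)) / (S.card : ℝ)} =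
        {ω | γ ≤ (fun T : Finset ι => ((S ∩ T).card : ℝ) / (k : ℝ))
          (D.filter (fun a => B a ω = 1))} := by
      ext ω; rw [Set.mem_setOf_eq, Set.mem_setOf_eq, hprec S hSD hScard ω]
    have hs2 : {ω | γ ≤ (∑ x ∈ Dk, (B x ω : ℝ)) / (Dk.card : ℝ)} =
        {ω | γ ≤ (fun T : Finset ι => ((Dk ∩ T).card : ℝ) / (k : ℝ))
          (D.filter (fun a => B a ω = 1))} := by
      ext ω; rw [Set.mem_setOf_eq, Set.mem_setOf_eq, hprec Dk hDkD hDkcard ω]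
    rw [hs1, hs2,
      key_prob P D φ B hmeas hBern hprob hφ hindep
        (fun T : Finset ι => ((S ∩ T).card : ℝ) / (k : ℝ)) γ,
      key_prob P D φ B hmeas hBern hprob hφ hindep
        (fun T : Finset ι => ((Dk ∩ T).card : ℝ) / (k : ℝ)) γ]
    exact chainG (fun m n => if γ ≤ (m:ℝ)/(k:ℝ) then (1:ℝ) else 0)
      (fun m n => hite _ _ (hG3 m n))
  · -- probability, recall
    refine (ENNReal.toReal_le_toReal (measure_ne_top _ _) (measure_ne_top _ _)).mp ?_
    have hs1 : {ω | γ ≤ (if (∑ x ∈ D, B x ω) = 0 then (1:ℝ)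
          else (∑ x ∈ S, (B x ω : ℝ)) / (∑ x ∈ D, (B x ω : ℝ)))} =
        {ω | γ ≤ (fun T : Finset ι => if T.card = 0 then (1:ℝ)
          else ((S ∩ T).card : ℝ) / (T.card : ℝ)) (D.filter (fun a => B a ω = 1))} := by
      ext ω; rw [Set.mem_setOf_eq, Set.mem_setOf_eq, hrec S hSD ω]
    have hs2 : {ω | γ ≤ (if (∑ x ∈ D, B x ω) = 0 then (1:ℝ)
          else (∑ x ∈ Dk, (B x ω : ℝ)) / (∑ x ∈ D, (B x ω : ℝ)))} =
        {ω | γ ≤ (fun T : Finset ι => if T.card = 0 then (1:ℝ)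
          else ((Dk ∩ T).card : ℝ) / (T.card : ℝ)) (D.filter (fun a => B a ω = 1))} := by
      ext ω; rw [Set.mem_setOf_eq, Set.mem_setOf_eq, hrec Dk hDkD ω]
    rw [hs1, hs2,
      key_prob P D φ B hmeas hBern hprob hφ hindep
        (fun T : Finset ι => if T.card = 0 then (1:ℝ)
          else ((S ∩ T).card : ℝ) / (T.card : ℝ)) γ,
      key_prob P D φ B hmeas hBern hprob hφ hindep
        (fun T : Finset ι => if T.card = 0 then (1:ℝ)
          else ((Dk ∩ T).card : ℝ) / (T.card : ℝ)) γ]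
    exact chainG
      (fun m n => if γ ≤ (if n = 0 then (1:ℝ) else (m:ℝ)/(n:ℝ)) then (1:ℝ) else 0)
      (fun m n => hite _ _ (hG4 m n))
  · -- expectation, precision
    calc ∫ ω, (∑ x ∈ S, (B x ω : ℝ)) / (S.card : ℝ) ∂P
        = ∑ T ∈ D.powerset, cfgW D φ T * (((S ∩ T).card : ℝ) / (k : ℝ)) := by
          rw [← key_int P D φ B hmeas hBern hprob hφ hindep
            (fun T : Finset ι => ((S ∩ T).card : ℝ) / (k : ℝ))]
          exact integral_congr_ae (Filter.Eventually.of_forall fun ω => hprec S hSD hScard ω)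
      _ ≤ ∑ T ∈ D.powerset, cfgW D φ T * (((Dk ∩ T).card : ℝ) / (k : ℝ)) :=
          chainG (fun m n => (m:ℝ)/(k:ℝ)) (fun m n => hG3 m n)
      _ = ∫ ω, (∑ x ∈ Dk, (B x ω : ℝ)) / (Dk.card : ℝ) ∂P := by
          rw [← key_int P D φ B hmeas hBern hprob hφ hindep
            (fun T : Finset ι => ((Dk ∩ T).card : ℝ) / (k : ℝ))]
          exact (integral_congr_ae
            (Filter.Eventually.of_forall fun ω => hprec Dk hDkD hDkcard ω)).symm
  · -- expectation, recall
    calc ∫ ω, (if (∑ x ∈ D, B x ω) = 0 then (1:ℝ)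
          else (∑ x ∈ S, (B x ω : ℝ)) / (∑ x ∈ D, (B x ω : ℝ))) ∂P
        = ∑ T ∈ D.powerset, cfgW D φ T *
            (if T.card = 0 then (1:ℝ) else ((S ∩ T).card : ℝ) / (T.card : ℝ)) := by
          rw [← key_int P D φ B hmeas hBern hprob hφ hindep
            (fun T : Finset ι => if T.card = 0 then (1:ℝ)
              else ((S ∩ T).card : ℝ) / (T.card : ℝ))]
          exact integral_congr_ae (Filter.Eventually.of_forall fun ω => hrec S hSD ω)
      _ ≤ ∑ T ∈ D.powerset, cfgW D φ T *
            (if T.card = 0 then (1:ℝ) else ((Dk ∩ T).card : ℝ) / (T.card : ℝ)) :=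
          chainG (fun m n => if n = 0 then (1:ℝ) else (m:ℝ)/(n:ℝ)) (fun m n => hG4 m n)
      _ = ∫ ω, (if (∑ x ∈ D, B x ω) = 0 then (1:ℝ)
          else (∑ x ∈ Dk, (B x ω : ℝ)) / (∑ x ∈ D, (B x ω : ℝ))) ∂P := by
          rw [← key_int P D φ B hmeas hBern hprob hφ hindep
            (fun T : Finset ι => if T.card = 0 then (1:ℝ)
              else ((Dk ∩ T).card : ℝ) / (T.card : ℝ))]
          exact (integral_congr_ae
            (Filter.Eventually.of_forall fun ω => hrec Dk hDkD ω)).symm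
end

section
/- The function s ↦ EOC(s, m̲(s)) = N(1 - (1 - s/N)^{m̲(s)}), where m̲(s) = log(δ)/log(∏_{i=0}^{c-1}(N-s-i)/(N-i)), is monotonically decreasing in s on 1 ≤ s ≤ N - c. -/
open Finset

lemma expRatio_mono {v w : ℝ} (hv : 0 < v) (hvw : v ≤ w) :
    (Real.exp v - 1) / v ≤ (Real.exp w - 1) / w := by
  rcases eq_or_lt_of_le hvw with rfl | hvw
  · exact le_refl _
  have hw : 0 < w := hv.trans hvw
  have hl : v / w ≤ 1 := (div_le_one hw).2 hvw.le
  have hl0 : 0 ≤ v / w := by positivity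
  have hconv := convexOn_exp.2 (Set.mem_univ w) (Set.mem_univ 0) hl0 (show (0:ℝ) ≤ 1 - v/w by linarith) (show v/w + (1 - v/w) = 1 by ring)
  simp only [smul_eq_mul, mul_zero, add_zero, Real.exp_zero, mul_one] at hconv
  -- hconv : Real.exp ((v/w) * w) ≤ (v/w) * Real.exp w + (1 - v/w)
  rw [div_mul_cancel₀ _ hw.ne'] at hconv
  have hconv' : w * Real.exp v ≤ v * Real.exp w + (w - v) := by
    have h2 := mul_le_mul_of_nonneg_left hconv hw.le
    have h3 : w * (v / w * Real.exp w + (1 - v / w)) = v * Real.exp w + (w - v) := by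
      field_simp
    linarith
  rw [div_le_div_iff₀ hv hw]
  nlinarith

lemma tRatio_mono {t₁ t₂ : ℝ} (h1 : 0 < t₁) (h12 : t₁ ≤ t₂) (h2 : t₂ < 1) :
    t₁ / ((1 - t₁) * (-Real.log (1 - t₁))) ≤ t₂ / ((1 - t₂) * (-Real.log (1 - t₂))) := by
  have h1' : t₁ < 1 := lt_of_le_of_lt h12 h2
  have ha : (0:ℝ) < 1 - t₁ := by linarith
  have hb : (0:ℝ) < 1 - t₂ := by linarith
  have hv1 : 0 < -Real.log (1 - t₁) := by
    have := Real.log_neg ha (by linarith); linarith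
  have hv2 : 0 < -Real.log (1 - t₂) := by
    have := Real.log_neg hb (by linarith); linarith
  have hvv : -Real.log (1 - t₁) ≤ -Real.log (1 - t₂) := by
    have := Real.log_le_log hb (by linarith : 1 - t₂ ≤ 1 - t₁); linarith
  have key := expRatio_mono hv1 hvv
  rw [Real.exp_neg, Real.exp_log ha, Real.exp_neg, Real.exp_log hb] at key
  have r1 : ((1 - t₁)⁻¹ - 1) / (-Real.log (1 - t₁))
      = t₁ / ((1 - t₁) * (-Real.log (1 - t₁))) := by
    rw [← div_div]
    congr 1
    field_simp
    ring
  have r2 : ((1 - t₂)⁻¹ - 1) / (-Real.log (1 - t₂))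
      = t₂ / ((1 - t₂) * (-Real.log (1 - t₂))) := by
    rw [← div_div]
    congr 1
    field_simp
    ring
  rw [r1, r2] at key
  exact key

lemma hasDeriv_G (r u : ℝ) (h0 : 0 < r * u) (h1 : r * u < 1) :
    HasDerivAt (fun x => Real.log (-Real.log (1 - r * x)))
      (r / ((1 - r * u) * (-Real.log (1 - r * u)))) u := by
  have h1' : (0:ℝ) < 1 - r * u := by linarith
  have hlt : 1 - r * u < 1 := by linarith
  have hlogpos : 0 < -Real.log (1 - r * u) := by
    have := Real.log_neg h1' hlt; linarith
  have d1 : HasDerivAt (fun x => 1 - r * x) (-r) u := by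
    simpa using ((hasDerivAt_id u).const_mul r).const_sub 1
  have d2 := d1.log h1'.ne'
  have d3 := d2.neg
  have d4 := d3.log hlogpos.ne'
  convert d4 using 1
  · rfl
  · simp only [Pi.neg_apply]; rw [neg_div (1 - r * u) r, neg_neg, div_div]

lemma cross (p q M Nr : ℝ) (hp : 0 < p) (hpq : p ≤ q) (hMN : M ≤ Nr) (hqM : q < M) :
    (-Real.log (1 - q / Nr)) * (-Real.log (1 - p / M))
      ≤ (-Real.log (1 - p / Nr)) * (-Real.log (1 - q / M)) := by
  have hq : 0 < q := hp.trans_le hpq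
  have hM : 0 < M := hq.trans hqM
  have hN : 0 < Nr := hM.trans_le hMN
  set u₁ := 1 / Nr with hu₁
  set u₂ := 1 / M with hu₂
  have hu1pos : 0 < u₁ := by positivity
  have hu12 : u₁ ≤ u₂ := by
    apply one_div_le_one_div_of_le hM hMN
  -- bounds on the interval
  have hbound : ∀ u ∈ Set.Icc u₁ u₂, 0 < p * u ∧ q * u < 1 := by
    intro u hu
    obtain ⟨hl, hr⟩ := hu
    constructor
    · have : 0 < u := lt_of_lt_of_le hu1pos hl
      positivity
    · have : q * u ≤ q * u₂ := by
        apply mul_le_mul_of_nonneg_left hr hq.le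
      have h2 : q * u₂ < 1 := by
        rw [hu₂]
        rw [mul_one_div, div_lt_one hM]
        exact hqM
      linarith
  set F := fun u => Real.log (-Real.log (1 - q * u)) - Real.log (-Real.log (1 - p * u)) with hF
  have hder : ∀ u ∈ Set.Icc u₁ u₂, HasDerivAt F
      (q / ((1 - q * u) * (-Real.log (1 - q * u))) - p / ((1 - p * u) * (-Real.log (1 - p * u)))) u := by
    intro u hu
    obtain ⟨hpu, hqu⟩ := hbound u hu
    have hupos : 0 < u := lt_of_lt_of_le hu1pos hu.1
    have hqupos : 0 < q * u := by positivity
    have hpu1 : p * u < 1 := lt_of_le_of_lt (by nlinarith) hqu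
    exact (hasDeriv_G q u hqupos hqu).sub (hasDeriv_G p u hpu hpu1)
  have hmono : MonotoneOn F (Set.Icc u₁ u₂) := by
    apply monotoneOn_of_deriv_nonneg (convex_Icc u₁ u₂)
    · exact fun u hu => ((hder u hu).continuousAt).continuousWithinAt
    · intro u hu
      rw [interior_Icc] at hu
      exact ((hder u (Set.mem_Icc_of_Ioo hu)).differentiableAt).differentiableWithinAt
    · intro u hu
      rw [interior_Icc] at hu
      have hu' := Set.mem_Icc_of_Ioo hu
      rw [(hder u hu').deriv]
      obtain ⟨hpu, hqu⟩ := hbound u hu'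
      have hupos : 0 < u := lt_of_lt_of_le hu1pos hu'.1
      have hpu1 : p * u < 1 := lt_of_le_of_lt (by nlinarith) hqu
      have ht := tRatio_mono hpu (by nlinarith : p * u ≤ q * u) hqu
      have hq1 : (1:ℝ) - q*u > 0 := by linarith
      have hp1 : (1:ℝ) - p*u > 0 := by linarith
      have hlq : 0 < -Real.log (1 - q*u) := by
        have := Real.log_neg hq1 (by nlinarith); linarith
      have hlp : 0 < -Real.log (1 - p*u) := by
        have := Real.log_neg hp1 (by nlinarith); linarith
      rw [sub_nonneg]
      rw [div_le_div_iff₀ (by positivity) (by positivity)] at ht ⊢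
      nlinarith
  have hFF := hmono (Set.left_mem_Icc.2 hu12) (Set.right_mem_Icc.2 hu12) hu12
  -- unfold F at endpoints
  have e1 : q * u₁ = q / Nr := by rw [hu₁]; ring
  have e2 : p * u₁ = p / Nr := by rw [hu₁]; ring
  have e3 : q * u₂ = q / M := by rw [hu₂]; ring
  have e4 : p * u₂ = p / M := by rw [hu₂]; ring
  rw [hF] at hFF
  simp only [e1, e2, e3, e4] at hFF
  have hqN1 : q / Nr < 1 := by rw [div_lt_one hN]; linarith
  have hqM1 : q / M < 1 := by rw [div_lt_one hM]; exact hqM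
  have hpN1 : p / Nr < 1 := lt_of_le_of_lt (by gcongr) hqN1
  have hpM1 : p / M < 1 := lt_of_le_of_lt (by gcongr) hqM1
  have logpos : ∀ x : ℝ, 0 < x → x < 1 → 0 < -Real.log (1 - x) := by
    intro x hx hx1
    have := Real.log_neg (by linarith : (0:ℝ) < 1 - x) (by linarith : 1 - x < 1)
    linarith
  have l1 := logpos (q/Nr) (by positivity) hqN1
  have l2 := logpos (p/Nr) (by positivity) hpN1
  have l3 := logpos (q/M) (by positivity) hqM1
  have l4 := logpos (p/M) (by positivity) hpM1
  calc (-Real.log (1 - q / Nr)) * (-Real.log (1 - p / M))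
      = Real.exp (Real.log (-Real.log (1 - q / Nr)) + Real.log (-Real.log (1 - p / M))) := by
        rw [Real.exp_add, Real.exp_log l1, Real.exp_log l4]
    _ ≤ Real.exp (Real.log (-Real.log (1 - p / Nr)) + Real.log (-Real.log (1 - q / M))) := by
        apply Real.exp_le_exp.2
        linarith
    _ = (-Real.log (1 - p / Nr)) * (-Real.log (1 - q / M)) := by
        rw [Real.exp_add, Real.exp_log l2, Real.exp_log l3]

lemma logP (N c : ℕ) (hc : 1 ≤ c) (hcN : c < N) (s : ℝ) (h1 : 1 ≤ s) (h2 : s ≤ (N:ℝ) - c) :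
    Real.log (∏ i ∈ Finset.range c, ((N:ℝ) - s - i) / ((N:ℝ) - i))
      = ∑ i ∈ Finset.range c, Real.log (1 - s / ((N:ℝ) - i)) := by
  have hcN' : (c:ℝ) < N := by exact_mod_cast hcN
  have hfac : ∀ i ∈ Finset.range c, ((N:ℝ) - s - i) / ((N:ℝ) - i) = 1 - s / ((N:ℝ) - i) := by
    intro i hi
    have hi' : (i:ℝ) < c := by exact_mod_cast Finset.mem_range.1 hi
    have hNi : (0:ℝ) < (N:ℝ) - i := by linarith
    field_simp
    ring
  rw [Finset.prod_congr rfl hfac]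
  rw [Real.log_prod]
  intro i hi
  have hi' : (i:ℝ) < c := by exact_mod_cast Finset.mem_range.1 hi
  have : (0:ℝ) < 1 - s / ((N:ℝ) - i) := by
    rw [sub_pos, div_lt_one (by linarith)]
    linarith
  exact this.ne'


/-- The function `s ↦ EOC(s, m̲(s)) = N(1 - (1 - s/N)^{m̲(s)})`, where
`m̲(s) = log δ / log(∏_{i=0}^{c-1}(N-s-i)/(N-i))`, is monotonically
decreasing in `s` on `1 ≤ s ≤ N - c`. -/
theorem stmt_14 (N c : ℕ) (hc : 1 ≤ c) (hcN : c < N)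
    (δ : ℝ) (hδ0 : 0 < δ) (hδ1 : δ < 1) :
    ∀ s₁ s₂ : ℝ, 1 ≤ s₁ → s₁ ≤ s₂ → s₂ ≤ (N : ℝ) - c →
      (N : ℝ) * (1 - (1 - s₂ / N) ^
          (Real.log δ /
            Real.log (∏ i ∈ Finset.range c, ((N : ℝ) - s₂ - i) / ((N : ℝ) - i))))
        ≤ (N : ℝ) * (1 - (1 - s₁ / N) ^
          (Real.log δ /
            Real.log (∏ i ∈ Finset.range c, ((N : ℝ) - s₁ - i) / ((N : ℝ) - i)))) := by
  intro s₁ s₂ h1 h12 h2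
  have hcN' : (c:ℝ) < N := by exact_mod_cast hcN
  have hc' : (1:ℝ) ≤ c := by exact_mod_cast hc
  have hN : (0:ℝ) < N := by linarith
  have h1' : 1 ≤ s₂ := le_trans h1 h12
  have h2' : s₁ ≤ (N:ℝ) - c := le_trans h12 h2
  -- abbreviations
  set a₁ := -Real.log (1 - s₁ / N) with ha₁
  set a₂ := -Real.log (1 - s₂ / N) with ha₂
  set B₁ := ∑ i ∈ Finset.range c, -Real.log (1 - s₁ / ((N:ℝ) - i)) with hB₁
  set B₂ := ∑ i ∈ Finset.range c, -Real.log (1 - s₂ / ((N:ℝ) - i)) with hB₂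
  have logpos : ∀ x : ℝ, 0 < x → x < 1 → 0 < -Real.log (1 - x) := by
    intro x hx hx1
    have := Real.log_neg (by linarith : (0:ℝ) < 1 - x) (by linarith : 1 - x < 1)
    linarith
  have hterm : ∀ s : ℝ, 1 ≤ s → s ≤ (N:ℝ) - c → ∀ i ∈ Finset.range c,
      0 < -Real.log (1 - s / ((N:ℝ) - i)) := by
    intro s hs1 hs2 i hi
    have hi' : (i:ℝ) < c := by exact_mod_cast Finset.mem_range.1 hi
    apply logpos
    · have : (0:ℝ) < (N:ℝ) - i := by linarith
      positivity
    · rw [div_lt_one (by linarith)]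
      linarith
  have hBpos₁ : 0 < B₁ :=
    Finset.sum_pos (hterm s₁ h1 h2') (Finset.nonempty_range_iff.2 (by omega))
  have hBpos₂ : 0 < B₂ :=
    Finset.sum_pos (hterm s₂ h1' h2) (Finset.nonempty_range_iff.2 (by omega))
  have hapos₁ : 0 < a₁ := by
    apply logpos
    · positivity
    · rw [div_lt_one hN]; linarith
  have hapos₂ : 0 < a₂ := by
    apply logpos
    · positivity
    · rw [div_lt_one hN]; linarith
  -- key summed inequality
  have hsum : a₂ * B₁ ≤ a₁ * B₂ := by
    rw [hB₁, hB₂, Finset.mul_sum, Finset.mul_sum]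
    apply Finset.sum_le_sum
    intro i hi
    have hi' : (i:ℝ) ≤ (c:ℝ) - 1 := by
      have := Finset.mem_range.1 hi
      have : (i:ℝ) + 1 ≤ c := by exact_mod_cast this
      linarith
    exact cross s₁ s₂ ((N:ℝ) - i) N (by linarith) h12 (by linarith : (N:ℝ) - i ≤ N) (by linarith)
  -- rewrite the log of the products
  have hlogP₁ : Real.log (∏ i ∈ Finset.range c, ((N:ℝ) - s₁ - i) / ((N:ℝ) - i)) = -B₁ := by
    rw [logP N c hc hcN s₁ h1 h2', hB₁, ← Finset.sum_neg_distrib]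
    simp
  have hlogP₂ : Real.log (∏ i ∈ Finset.range c, ((N:ℝ) - s₂ - i) / ((N:ℝ) - i)) = -B₂ := by
    rw [logP N c hc hcN s₂ h1' h2, hB₂, ← Finset.sum_neg_distrib]
    simp
  have hδlog : Real.log δ < 0 := Real.log_neg hδ0 hδ1
  -- core exponent inequality
  have hx₁ : (0:ℝ) < 1 - s₁ / N := by
    rw [sub_pos, div_lt_one hN]; linarith
  have hx₂ : (0:ℝ) < 1 - s₂ / N := by
    rw [sub_pos, div_lt_one hN]; linarith
  have hexp : Real.log (1 - s₁ / N) * (Real.log δ / Real.log (∏ i ∈ Finset.range c, ((N:ℝ) - s₁ - i) / ((N:ℝ) - i)))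
      ≤ Real.log (1 - s₂ / N) * (Real.log δ / Real.log (∏ i ∈ Finset.range c, ((N:ℝ) - s₂ - i) / ((N:ℝ) - i))) := by
    rw [hlogP₁, hlogP₂]
    have e1 : Real.log (1 - s₁ / N) = -a₁ := by rw [ha₁]; ring
    have e2 : Real.log (1 - s₂ / N) = -a₂ := by rw [ha₂]; ring
    rw [e1, e2]
    have r1 : (-a₁) * (Real.log δ / (-B₁)) = Real.log δ * (a₁ / B₁) := by
      rw [div_neg]; ring
    have r2 : (-a₂) * (Real.log δ / (-B₂)) = Real.log δ * (a₂ / B₂) := by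
      rw [div_neg]; ring
    rw [r1, r2]
    apply mul_le_mul_of_nonpos_left _ hδlog.le
    rw [div_le_div_iff₀ hBpos₂ hBpos₁]
    linarith
  -- conclude via rpow monotonicity
  have hf : (1 - s₁ / N) ^ (Real.log δ / Real.log (∏ i ∈ Finset.range c, ((N:ℝ) - s₁ - i) / ((N:ℝ) - i)))
      ≤ (1 - s₂ / N) ^ (Real.log δ / Real.log (∏ i ∈ Finset.range c, ((N:ℝ) - s₂ - i) / ((N:ℝ) - i))) := by
    rw [Real.rpow_def_of_pos hx₁, Real.rpow_def_of_pos hx₂]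
    exact Real.exp_le_exp.2 hexp
  apply mul_le_mul_of_nonneg_left _ hN.le
  linarith
end

section
/- For integers N > c ≥ 1, the quantity h(c) = log(N/c) / (Σ_{i=0}^{c-1} log((N-i)/(c-i))) satisfies h(c) ≥ 1/(cN). -/
open Finset

/-- For integers `N > c ≥ 1`,
`h(c) = log(N/c) / (Σ_{i=0}^{c-1} log((N-i)/(c-i)))` satisfies `h(c) ≥ 1/(cN)`. -/
theorem stmt_16 (N c : ℕ) (hc : 1 ≤ c) (hcN : c < N) :
    Real.log ((N : ℝ) / c) /
        (∑ i ∈ Finset.range c, Real.log (((N : ℝ) - i) / ((c : ℝ) - i))) ≥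
      1 / ((c : ℝ) * N) := by
  have hcR : (1:ℝ) ≤ c := by exact_mod_cast hc
  have hcpos : (0:ℝ) < c := by linarith
  have hNc : (c:ℝ) < N := by exact_mod_cast hcN
  have hNpos : (0:ℝ) < N := by linarith
  set L := Real.log ((N:ℝ)/c) with hL
  set S := ∑ i ∈ Finset.range c, Real.log (((N : ℝ) - i) / ((c : ℝ) - i)) with hS
  have hterm1 : ∀ i ∈ Finset.range c, (1:ℝ) ≤ ((c:ℝ) - i) := by
    intro i hi
    have h1 : i + 1 ≤ c := Finset.mem_range.mp hi
    have h2 : ((i:ℝ) + 1) ≤ c := by exact_mod_cast h1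
    linarith
  have hSpos : 0 < S := by
    apply Finset.sum_pos'
    · intro i hi
      have h1 := hterm1 i hi
      apply Real.log_nonneg
      rw [le_div_iff₀ (by linarith)]
      linarith
    · refine ⟨0, Finset.mem_range.mpr hc, ?_⟩
      simp only [Nat.cast_zero, sub_zero]
      apply Real.log_pos
      rw [lt_div_iff₀ hcpos]; linarith
  have hLlow : ((N:ℝ) - c)/N ≤ L := by
    have hx : (0:ℝ) < (c:ℝ)/N := div_pos hcpos hNpos
    have h1 := Real.log_le_sub_one_of_pos hx
    have hlog : Real.log ((c:ℝ)/N) = -L := by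
      rw [hL, ← Real.log_inv]
      congr 1
      field_simp
    rw [hlog] at h1
    have h2 : ((N:ℝ) - c)/N = 1 - (c:ℝ)/N := by field_simp
    linarith
  have hSle : S ≤ c * ((N:ℝ) - c) := by
    have hbd : ∀ i ∈ Finset.range c,
        Real.log (((N : ℝ) - i) / ((c : ℝ) - i)) ≤ (N:ℝ) - c := by
      intro i hi
      have h1 := hterm1 i hi
      have hxpos : (0:ℝ) < ((N : ℝ) - i) / ((c : ℝ) - i) := by
        apply div_pos <;> linarith
      have h2 := Real.log_le_sub_one_of_pos hxpos
      have h3 : ((N : ℝ) - i) / ((c : ℝ) - i) - 1 = ((N:ℝ) - c) / ((c:ℝ) - i) := by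
        field_simp
        ring
      have h4 : ((N:ℝ) - c) / ((c:ℝ) - i) ≤ (N:ℝ) - c :=
        div_le_self (by linarith) h1
      linarith
    calc S ≤ ∑ _i ∈ Finset.range c, ((N:ℝ) - c) := Finset.sum_le_sum hbd
    _ = c * ((N:ℝ) - c) := by
        rw [Finset.sum_const, Finset.card_range]; simp [nsmul_eq_mul]
  rw [ge_iff_le, div_le_div_iff₀ (mul_pos hcpos hNpos) hSpos]
  have key : ((N:ℝ) - c)/N * N = (N:ℝ) - c := by field_simp
  nlinarith [mul_le_mul_of_nonneg_right hLlow (le_of_lt (mul_pos hcpos hNpos))]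
end

section
/- The savings ratio of the s=1 strategy satisfies ξ(1, m(1)) ≥ δ^{(-1/c)(1/N - N/(N-1))} · (1 - 1/N), where m(1) = ⌈log(δ)/log(∏_{i=0}^{c-1}(N-1-i)/(N-i))⌉ and ξ(s,m) = (N - EOC(s,m))/(N - EOC(s*, m*)) with (s*,m*) minimizing EOC subject to the success-probability constraint. -/
open Finset

set_option maxHeartbeats 1000000 in
/-- The savings ratio of the `s = 1` strategy satisfies
`ξ(1, m(1)) ≥ δ^{(-1/c)(1/N - N/(N-1))} · (1 - 1/N)`, where
`m(1) = ⌈log δ / log(∏_{i=0}^{c-1}(N-1-i)/(N-i))⌉`,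
`ξ(s,m) = (N - EOC(s,m))/(N - EOC(s*,m*))`, `EOC(s,m) = N(1-(1-s/N)^m)`,
and `(s*,m*)` minimizes `EOC` over integer pairs satisfying the
success-probability constraint `1-(∏_{i=0}^{c-1}(N-s-i)/(N-i))^m ≥ 1-δ`. -/
theorem stmt_17 (N c : ℕ) (hc : 1 ≤ c) (hcN : c < N)
    (δ : ℝ) (hδ0 : 0 < δ) (hδ1 : δ < 1)
    (sstar mstar : ℕ) (hs1 : 1 ≤ sstar) (hssc : sstar + c ≤ N) (hm1 : 1 ≤ mstar)
    (hfeas : 1 - (∏ i ∈ Finset.range c,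
        ((N : ℝ) - sstar - i) / ((N : ℝ) - i)) ^ mstar ≥ 1 - δ)
    (hopt : ∀ s m : ℕ, 1 ≤ s → s + c ≤ N → 1 ≤ m →
      1 - (∏ i ∈ Finset.range c, ((N : ℝ) - s - i) / ((N : ℝ) - i)) ^ m ≥ 1 - δ →
      (N : ℝ) * (1 - (1 - (sstar : ℝ) / N) ^ mstar) ≤
        (N : ℝ) * (1 - (1 - (s : ℝ) / N) ^ m)) :
    ((N : ℝ) - (N : ℝ) * (1 - (1 - 1 / (N : ℝ)) ^
        (⌈Real.log δ / Real.log (∏ i ∈ Finset.range c,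
            ((N : ℝ) - 1 - i) / ((N : ℝ) - i))⌉₊))) /
      ((N : ℝ) - (N : ℝ) * (1 - (1 - (sstar : ℝ) / N) ^ mstar)) ≥
    δ ^ ((-1 / (c : ℝ)) * (1 / (N : ℝ) - (N : ℝ) / ((N : ℝ) - 1))) *
      (1 - 1 / (N : ℝ)) := by
  have hN2 : 2 ≤ N := lt_of_le_of_lt hc hcN
  have hNR : (2 : ℝ) ≤ (N : ℝ) := by exact_mod_cast hN2
  have hN0 : (0 : ℝ) < N := by linarith
  have hcR : (1 : ℝ) ≤ (c : ℝ) := by exact_mod_cast hc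
  have hcNR : (c : ℝ) < (N : ℝ) := by exact_mod_cast hcN
  set a : ℝ := 1 - 1 / (N : ℝ) with ha_def
  have ha0 : 0 < a := by
    have h1 : 1 / (N : ℝ) ≤ 1 / 2 := by
      apply div_le_div_of_nonneg_left <;> linarith
    simp only [ha_def]; linarith
  have ha1 : a < 1 := by
    have : 0 < 1 / (N : ℝ) := by positivity
    simp only [ha_def]; linarith
  have hloga : Real.log a < 0 := Real.log_neg ha0 ha1
  have hlogδ : Real.log δ < 0 := Real.log_neg hδ0 hδ1
  set P : ℝ := ∏ i ∈ Finset.range c, ((N : ℝ) - 1 - i) / ((N : ℝ) - i) with hP_def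
  have hfac : ∀ i ∈ Finset.range c, 0 < ((N : ℝ) - 1 - i) / ((N : ℝ) - i) := by
    intro i hi
    rw [Finset.mem_range] at hi
    have hiR : (i : ℝ) ≤ (c : ℝ) - 1 := by
      have : (i : ℝ) + 1 ≤ (c : ℝ) := by exact_mod_cast hi
      linarith
    apply div_pos <;> linarith
  have hP0 : 0 < P := Finset.prod_pos hfac
  have hPle : P ≤ a ^ c := by
    have hac : a ^ c = ∏ _i ∈ Finset.range c, a := by
      simp [Finset.prod_const]
    rw [hac]
    apply Finset.prod_le_prod
    · intro i hi; exact le_of_lt (hfac i hi)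
    · intro i hi
      rw [Finset.mem_range] at hi
      have hiR : (i : ℝ) ≤ (c : ℝ) - 1 := by
        have : (i : ℝ) + 1 ≤ (c : ℝ) := by exact_mod_cast hi
        linarith
      have hi0 : (0 : ℝ) ≤ (i : ℝ) := Nat.cast_nonneg i
      rw [div_le_iff₀ (by linarith)]
      have ha_eq : a = ((N : ℝ) - 1) / N := by
        rw [ha_def]; field_simp
      rw [ha_eq, div_mul_eq_mul_div, le_div_iff₀ hN0]
      nlinarith
  have hL : Real.log P ≤ (c : ℝ) * Real.log a := by
    calc Real.log P ≤ Real.log (a ^ c) := Real.log_le_log hP0 hPle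
    _ = (c : ℝ) * Real.log a := by rw [Real.log_pow]
  have hLneg : Real.log P < 0 := lt_of_le_of_lt hL (by nlinarith)
  set x : ℝ := Real.log δ / Real.log P with hx_def
  have hx0 : 0 < x := div_pos_of_neg_of_neg hlogδ hLneg
  set m1 : ℕ := ⌈x⌉₊ with hm1_def
  have hm1x : (m1 : ℝ) - 1 ≤ x := by
    have := Nat.ceil_lt_add_one (le_of_lt hx0)
    simp only [hm1_def]
    linarith
  -- denominator bounds
  have hsN : (sstar : ℝ) ≤ (N : ℝ) - 1 := by
    have h1 : sstar + 1 ≤ N := le_trans (by omega) hssc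
    have h2 : (sstar : ℝ) + 1 ≤ (N : ℝ) := by exact_mod_cast h1
    linarith
  have hs1R : (1 : ℝ) ≤ (sstar : ℝ) := by exact_mod_cast hs1
  have hb0 : 0 < 1 - (sstar : ℝ) / N := by
    rw [sub_pos, div_lt_one hN0]; linarith
  have hba : 1 - (sstar : ℝ) / N ≤ a := by
    have h1 : 1 / (N : ℝ) ≤ (sstar : ℝ) / N := by gcongr
    simp only [ha_def]; linarith
  have hD0 : 0 < (1 - (sstar : ℝ) / N) ^ mstar := pow_pos hb0 _
  have hDa : (1 - (sstar : ℝ) / N) ^ mstar ≤ a := by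
    calc (1 - (sstar : ℝ) / N) ^ mstar ≤ (1 - (sstar : ℝ) / N) ^ 1 := by
          apply pow_le_pow_of_le_one hb0.le (le_trans hba ha1.le) hm1
    _ = 1 - (sstar : ℝ) / N := pow_one _
    _ ≤ a := hba
  -- simplify the goal
  have e1 : (N : ℝ) - (N : ℝ) * (1 - a ^ m1) = (N : ℝ) * a ^ m1 := by ring
  have e2 : (N : ℝ) - (N : ℝ) * (1 - (1 - (sstar : ℝ) / N) ^ mstar)
      = (N : ℝ) * ((1 - (sstar : ℝ) / N) ^ mstar) := by ring
  rw [ge_iff_le, e1, e2, mul_div_mul_left _ _ (ne_of_gt hN0)]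
  -- key inequality chain
  set α : ℝ := (-1 / (c : ℝ)) * (1 / (N : ℝ) - (N : ℝ) / ((N : ℝ) - 1)) with hα_def
  have key1 : Real.log a / Real.log P ≤ 1 / (c : ℝ) := by
    rw [show Real.log a / Real.log P = (-Real.log a) / (-Real.log P) by
      rw [neg_div_neg_eq]]
    rw [div_le_div_iff₀ (by linarith) (by linarith)]
    nlinarith
  have key2 : Real.log δ / (c : ℝ) ≤ x * Real.log a := by
    have h1 : x * Real.log a = Real.log δ * (Real.log a / Real.log P) := by
      rw [hx_def]; ring
    rw [h1]
    have := mul_le_mul_of_nonpos_left key1 hlogδ.le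
    calc Real.log δ / (c : ℝ) = Real.log δ * (1 / (c : ℝ)) := by ring
    _ ≤ Real.log δ * (Real.log a / Real.log P) := this
  have hα_ge : 1 / (c : ℝ) ≤ α := by
    have h5 : (1 : ℝ) ≤ (N : ℝ) / ((N : ℝ) - 1) - 1 / (N : ℝ) := by
      rw [div_sub_div _ _ (by linarith : (N : ℝ) - 1 ≠ 0) (by linarith : (N : ℝ) ≠ 0),
        le_div_iff₀ (by nlinarith)]
      nlinarith
    have h6 : α = (1 / (c : ℝ)) * ((N : ℝ) / ((N : ℝ) - 1) - 1 / (N : ℝ)) := by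
      rw [hα_def]; ring
    rw [h6]
    nlinarith [h5, (by positivity : (0:ℝ) < 1 / (c : ℝ))]
  have key3 : α * Real.log δ + Real.log a ≤ Real.log δ / (c : ℝ) := by
    have h7 := mul_le_mul_of_nonpos_left hα_ge hlogδ.le
    rw [mul_one_div] at h7
    nlinarith [h7, hloga]
  -- put the chain together
  have main : δ ^ α * a ≤ a ^ m1 / a := by
    have hx_le : δ ^ α * a ≤ a ^ (x : ℝ) := by
      have e3 : δ ^ α * a = Real.exp (Real.log δ * α + Real.log a) := by
        rw [Real.rpow_def_of_pos hδ0, Real.exp_add, Real.exp_log ha0]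
      have e4 : a ^ (x : ℝ) = Real.exp (Real.log a * x) := Real.rpow_def_of_pos ha0 x
      rw [e3, e4]
      apply Real.exp_le_exp.mpr
      nlinarith [key2, key3]
    have h2 : a ^ (x : ℝ) ≤ a ^ ((m1 : ℝ) - 1) :=
      Real.rpow_le_rpow_of_exponent_ge ha0 ha1.le hm1x
    have h3 : a ^ ((m1 : ℝ) - 1) = a ^ m1 / a := by
      rw [Real.rpow_sub ha0, Real.rpow_natCast, Real.rpow_one]
    rw [← h3]
    exact hx_le.trans h2
  calc δ ^ α * a ≤ a ^ m1 / a := main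
  _ ≤ a ^ m1 / ((1 - (sstar : ℝ) / N) ^ mstar) := by
      apply div_le_div_of_nonneg_left (by positivity) hD0 hDa
end

section
/- For s_1 = ⌈-log(δ)/Σ_{i=0}^{c-1} 1/(N-i)⌉ and m = 1, the single-sample strategy satisfies the success constraint: ∏_{i=0}^{c-1}(N-s_1-i)/(N-i) ≤ δ, i.e. f(N, s_1, 1, c) ≥ 1 - δ. -/
open Finset

/-- For `s₁ = ⌈-log δ / Σ_{i=0}^{c-1} 1/(N-i)⌉` and `m = 1`, the
single-sample strategy satisfies the success constraint:
`∏_{i=0}^{c-1}(N-s₁-i)/(N-i) ≤ δ`. -/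
theorem stmt_18 (N c : ℕ) (hc : 1 ≤ c) (hcN : c < N)
    (δ : ℝ) (hδ0 : 0 < δ) (hδ1 : δ < 1)
    (hs1c : ⌈(-Real.log δ) / (∑ i ∈ Finset.range c, 1 / ((N : ℝ) - i))⌉₊ + c ≤ N) :
    ∏ i ∈ Finset.range c,
      ((N : ℝ) - (⌈(-Real.log δ) /
          (∑ j ∈ Finset.range c, 1 / ((N : ℝ) - j))⌉₊ : ℕ) - i) / ((N : ℝ) - i)
      ≤ δ := by
  set S : ℝ := ∑ i ∈ Finset.range c, 1 / ((N : ℝ) - i) with hSdef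
  set s : ℕ := ⌈(-Real.log δ) / S⌉₊ with hsdef
  have hNi : ∀ i ∈ Finset.range c, (0:ℝ) < (N:ℝ) - i := by
    intro i hi
    simp only [mem_range] at hi
    have : (i:ℝ) < N := by exact_mod_cast hi.trans hcN
    linarith
  have hpos : ∀ i ∈ Finset.range c,
      (0:ℝ) < ((N:ℝ) - s - i) / ((N:ℝ) - i) := by
    intro i hi
    simp only [mem_range] at hi
    have h1 : s + i < N := by omega
    have h1' : (s:ℝ) + i < N := by exact_mod_cast h1
    have h2 : (0:ℝ) < (N:ℝ) - i := hNi i (by simpa using hi)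
    exact div_pos (by linarith) h2
  have hS0 : 0 < S := by
    rw [hSdef]
    apply Finset.sum_pos
    · intro i hi
      exact one_div_pos.mpr (hNi i hi)
    · exact nonempty_range_iff.mpr (by omega)
  have hceil : (-Real.log δ) / S ≤ (s:ℝ) := Nat.le_ceil _
  have hmul : -Real.log δ ≤ (s:ℝ) * S := (div_le_iff₀ hS0).mp hceil
  have hlog : Real.log (∏ i ∈ Finset.range c,
      ((N:ℝ) - s - i) / ((N:ℝ) - i)) ≤ Real.log δ := by
    rw [Real.log_prod (fun i hi => (hpos i hi).ne')]
    have hterm : ∀ i ∈ Finset.range c,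
        Real.log (((N:ℝ) - s - i) / ((N:ℝ) - i)) ≤ -(s:ℝ) * (1 / ((N:ℝ) - i)) := by
      intro i hi
      have h2 := hNi i hi
      have := Real.log_le_sub_one_of_pos (hpos i hi)
      have heq : ((N:ℝ) - s - i) / ((N:ℝ) - i) - 1 = -(s:ℝ) * (1 / ((N:ℝ) - i)) := by
        field_simp
        ring
      linarith [heq ▸ this]
    calc ∑ i ∈ Finset.range c, Real.log (((N:ℝ) - s - i) / ((N:ℝ) - i))
        ≤ ∑ i ∈ Finset.range c, -(s:ℝ) * (1 / ((N:ℝ) - i)) :=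
          Finset.sum_le_sum hterm
      _ = -(s:ℝ) * S := by rw [hSdef, Finset.mul_sum]
      _ ≤ Real.log δ := by linarith
  have hprodpos : 0 < ∏ i ∈ Finset.range c, ((N:ℝ) - s - i) / ((N:ℝ) - i) :=
    Finset.prod_pos hpos
  have := Real.exp_le_exp.mpr hlog
  rwa [Real.exp_log hprodpos, Real.exp_log hδ0] at this
end
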